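/- Let t be a regular operator between Hilbert C*-modules E and F. Then t has closed range if and only if its adjoint t* has closed range. -/

import Mathlib

/- Framework: Hilbert C*-modules over a C*-algebra `A` (via Mathlib's `CStarModule`),
densely defined operators as `LinearPMap`s, `A`-valued orthogonality, adjoints,
regularity, graphs inside `E ⊕ F`. -/

open scoped InnerProductSpace RightActions WithCStarModule

namespace RegularOperators

/-- The `CStarModule` class as it stood in the older Mathlib (right `A`-modules, action of `Aᵐᵒᵖ`,
`⟪x, y <• a⟫ = ⟪x, y⟫ * a`); Mathlib's `CStarModule` is now a left module. -/
class RightCStarModule (A : outParam <| Type*) (E : Type*) [NonUnitalSemiring A] [StarRing A]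
    [Module ℂ A] [AddCommGroup E] [Module ℂ E] [PartialOrder A] [SMul Aᵐᵒᵖ E] [Norm A] [Norm E]
    extends Inner A E where
  inner_add_right {x} {y} {z} : inner x (y + z) = inner x y + inner x z
  inner_self_nonneg {x} : 0 ≤ inner x x
  inner_self {x} : inner x x = 0 ↔ x = 0
  inner_op_smul_right {a : A} {x y : E} : inner x (y <• a) = inner x y * a
  inner_smul_right_complex {z : ℂ} {x} {y} : inner x (z • y) = z • inner x y
  star_inner x y : star (inner x y) = inner y x
  norm_eq_sqrt_norm_inner_self x : ‖x‖ = √‖inner x x‖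

variable (A : Type*) [NonUnitalCStarAlgebra A] [PartialOrder A] [StarOrderedRing A]

section Defs

variable {E F : Type*}
  [NormedAddCommGroup E] [Module ℂ E] [SMul Aᵐᵒᵖ E] [RightCStarModule A E]
  [NormedAddCommGroup F] [Module ℂ F] [SMul Aᵐᵒᵖ F] [RightCStarModule A F]

/-- Orthogonal complement of a subset w.r.t. the `A`-valued inner product. -/
def ortho {X : Type*} [Inner A X] (S : Set X) : Set X := {y | ∀ u ∈ S, ⟪u, y⟫_A = 0}

/-- `S` is orthogonally complemented (an orthogonal summand): every element of `E`
decomposes as a sum of an element of `S` and an element of `S^⊥`. -/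
def OrthoComplemented (S : Set E) : Prop := ∀ z : E, ∃ u ∈ S, ∃ v ∈ ortho A S, z = u + v

/-- A partially defined operator is `A`-linear (for the right `A`-module action). -/
def AModuleMap (t : E →ₗ.[ℂ] F) : Prop :=
  ∀ (a : A) (x : t.domain), ∃ hx : (x : E) <• a ∈ t.domain, t ⟨(x : E) <• a, hx⟩ = (t x) <• a

/-- Kernel of a partially defined operator, as a subset of `E`. -/
def kerSet (t : E →ₗ.[ℂ] F) : Set E := {x | ∃ hx : x ∈ t.domain, t ⟨x, hx⟩ = 0}

/-- Range of a partially defined operator. -/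
def ranSet (t : E →ₗ.[ℂ] F) : Set F := {y | ∃ x : t.domain, t x = y}

/-- Domain of the adjoint: those `y` for which some `z` satisfies `⟪tx, y⟫ = ⟪x, z⟫`
for all `x` in the domain of `t`. -/
def adjDomain (t : E →ₗ.[ℂ] F) : Set F :=
  {y | ∃ z : E, ∀ x : t.domain, ⟪t x, y⟫_A = ⟪(x : E), z⟫_A}

/-- `s` is the adjoint operator `t*` of `t`. -/
structure IsAdjoint (t : E →ₗ.[ℂ] F) (s : F →ₗ.[ℂ] E) : Prop where
  dom : (s.domain : Set F) = adjDomain A t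
  inner_eq : ∀ (x : t.domain) (y : s.domain), ⟪t x, (y : F)⟫_A = ⟪(x : E), s y⟫_A

/-- The range of `1 + t*t` (where `s` plays the role of `t*`). -/
def onePlusRange (t : E →ₗ.[ℂ] F) (s : F →ₗ.[ℂ] E) : Set E :=
  {u | ∃ (x : t.domain) (h : t x ∈ s.domain), (x : E) + s ⟨t x, h⟩ = u}

/-- `t` is a regular operator with adjoint `s`: it is `A`-linear, densely defined,
closed, adjointable with densely defined adjoint, and `1 + t*t` has dense range. -/
structure IsRegular (t : E →ₗ.[ℂ] F) (s : F →ₗ.[ℂ] E) : Prop where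
  amod : AModuleMap A t
  denseDom : Dense (t.domain : Set E)
  closedGraph : IsClosed (t.graph : Set (E × F))
  adj : IsAdjoint A t s
  denseAdjDom : Dense (s.domain : Set F)
  denseOnePlusRange : Dense (onePlusRange t s)

/-- The graph of `t` inside the Hilbert `A`-module `E ⊕ F`. -/
instance prodInner : Inner A (C⋆ᵐᵒᵈ(A, E × F)) where
  inner x y := ⟪(WithCStarModule.equiv A (E × F) x).1, (WithCStarModule.equiv A (E × F) y).1⟫_A +
    ⟪(WithCStarModule.equiv A (E × F) x).2, (WithCStarModule.equiv A (E × F) y).2⟫_A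

def graphSet (t : E →ₗ.[ℂ] F) : Set (C⋆ᵐᵒᵈ(A, E × F)) :=
  {w | ∃ x : t.domain, WithCStarModule.equiv A (E × F) w = ((x : E), t x)}

/-- The range of `P_F ∘ P_{G(t)^⊥}`, i.e. the image of `G(t)^⊥ ⊆ E ⊕ F` under the
canonical projection onto `F`. -/
def pfRange (t : E →ₗ.[ℂ] F) : Set F :=
  {y | ∃ w ∈ ortho A (graphSet A t), (WithCStarModule.equiv A (E × F) w).2 = y}

end Defs

end RegularOperators

open RegularOperators
variable {A : Type*} [NonUnitalCStarAlgebra A] [PartialOrder A] [StarOrderedRing A]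
variable {E F : Type*}
  [NormedAddCommGroup E] [Module ℂ E] [SMul Aᵐᵒᵖ E] [RightCStarModule A E] [CompleteSpace E]
  [NormedAddCommGroup F] [Module ℂ F] [SMul Aᵐᵒᵖ F] [RightCStarModule A F] [CompleteSpace F]

namespace RegularOperators
namespace RightCStarModule

section general
variable {A E : Type*} [NonUnitalCStarAlgebra A] [PartialOrder A] [StarOrderedRing A]
  [NormedAddCommGroup E] [Module ℂ E] [SMul Aᵐᵒᵖ E] [RightCStarModule A E]

lemma inner_add_left {x y z : E} : ⟪x + y, z⟫_A = ⟪x, z⟫_A + ⟪y, z⟫_A := by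
  rw [← star_inner z (x + y), inner_add_right, star_add, star_inner, star_inner]

lemma inner_smul_left_complex {c : ℂ} {x y : E} : ⟪c • x, y⟫_A = star c • ⟪x, y⟫_A := by
  rw [← star_inner y, inner_smul_right_complex, star_smul, star_inner]

lemma inner_op_smul_left {a : A} {x y : E} : ⟪x <• a, y⟫_A = star a * ⟪x, y⟫_A := by
  rw [← star_inner y, inner_op_smul_right, star_mul, star_inner]

noncomputable def innerSesq : E →ₗ⋆[ℂ] E →ₗ[ℂ] A where
  toFun x := { toFun := fun y => ⟪x, y⟫_A
               map_add' := fun _ _ => inner_add_right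
               map_smul' := fun _ _ => inner_smul_right_complex }
  map_add' _ _ := by ext; exact inner_add_left
  map_smul' _ _ := by ext; exact inner_smul_left_complex

lemma inner_zero_right {x : E} : ⟪x, (0 : E)⟫_A = 0 :=
  (innerSesq (A := A) x).map_zero

lemma inner_zero_left {x : E} : ⟪(0 : E), x⟫_A = 0 := by
  rw [← star_inner x, inner_zero_right, star_zero]

lemma inner_neg_right {x y : E} : ⟪x, -y⟫_A = -⟪x, y⟫_A :=
  (innerSesq (A := A) x).map_neg y

lemma inner_sub_right {x y z : E} : ⟪x, y - z⟫_A = ⟪x, y⟫_A - ⟪x, z⟫_A :=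
  (innerSesq (A := A) x).map_sub y z

lemma inner_sub_left {x y z : E} : ⟪x - y, z⟫_A = ⟪x, z⟫_A - ⟪y, z⟫_A := by
  rw [← star_inner z, inner_sub_right, star_sub, star_inner, star_inner]

lemma inner_smul_right_real {r : ℝ} {x y : E} : ⟪x, r • y⟫_A = r • ⟪x, y⟫_A := by
  have h₁ : r • y = (r : ℂ) • y := by simp
  rw [h₁, inner_smul_right_complex]
  simp

lemma inner_smul_left_real {r : ℝ} {x y : E} : ⟪r • x, y⟫_A = r • ⟪x, y⟫_A := by
  rw [← star_inner y, inner_smul_right_real, star_smul, star_inner]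
  simp

lemma norm_sq_eq {x : E} : ‖x‖ ^ 2 = ‖⟪x, x⟫_A‖ := by
  rw [norm_eq_sqrt_norm_inner_self (A := A) x, Real.sq_sqrt (norm_nonneg _)]

lemma inner_swap_mul_inner_le {x y : E} : ⟪y, x⟫_A * ⟪x, y⟫_A ≤ ‖x‖ ^ 2 • ⟪y, y⟫_A := by
  rcases eq_or_ne x 0 with h | h
  · subst h
    rw [inner_zero_left, mul_zero, norm_zero]
    simp
  · have h₁ : ∀ (a : A), (0 : A) ≤ ‖x‖ ^ 2 • (star a * a) - ‖x‖ ^ 2 • (⟪y, x⟫_A * a)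
        - ‖x‖ ^ 2 • (star a * ⟪x, y⟫_A) + ‖x‖ ^ 2 • (‖x‖ ^ 2 • ⟪y, y⟫_A) := fun a => by
      calc (0 : A) ≤ ⟪x <• a - ‖x‖ ^ 2 • y, x <• a - ‖x‖ ^ 2 • y⟫_A := inner_self_nonneg
        _ = star a * ⟪x, x⟫_A * a - ‖x‖ ^ 2 • (⟪y, x⟫_A * a)
              - ‖x‖ ^ 2 • (star a * ⟪x, y⟫_A) + ‖x‖ ^ 2 • (‖x‖ ^ 2 • ⟪y, y⟫_A) := by
            simp only [inner_sub_right, inner_op_smul_right, inner_sub_left, inner_op_smul_left,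
              inner_smul_left_real, inner_smul_right_real, smul_sub, mul_smul_comm,
              smul_mul_assoc, mul_assoc, sub_mul, mul_sub]
            abel
        _ ≤ ‖x‖ ^ 2 • (star a * a) - ‖x‖ ^ 2 • (⟪y, x⟫_A * a)
              - ‖x‖ ^ 2 • (star a * ⟪x, y⟫_A) + ‖x‖ ^ 2 • (‖x‖ ^ 2 • ⟪y, y⟫_A) := by
            gcongr
            calc star a * ⟪x, x⟫_A * a ≤ ‖⟪x, x⟫_A‖ • (star a * a) :=
                  CStarAlgebra.star_left_conjugate_le_norm_smul (star_inner x x)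
              _ = ‖x‖ ^ 2 • (star a * a) := by rw [norm_sq_eq]
    specialize h₁ ⟪x, y⟫_A
    simp only [star_inner, sub_self, zero_sub, le_neg_add_iff_add_le, add_zero] at h₁
    rwa [smul_le_smul_iff_of_pos_left (pow_pos (norm_pos_iff.mpr h) _)] at h₁

variable (E) in
lemma norm_inner_le {x y : E} : ‖⟪x, y⟫_A‖ ≤ ‖x‖ * ‖y‖ := by
  have := calc ‖⟪x, y⟫_A‖ ^ 2 = ‖⟪y, x⟫_A * ⟪x, y⟫_A‖ := by
                rw [← star_inner x, CStarRing.norm_star_mul_self, pow_two]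
    _ ≤ ‖‖x‖ ^ 2 • ⟪y, y⟫_A‖ := by
                refine CStarAlgebra.norm_le_norm_of_nonneg_of_le ?_ inner_swap_mul_inner_le
                rw [← star_inner x]
                exact star_mul_self_nonneg ⟪x, y⟫_A
    _ = ‖x‖ ^ 2 * ‖⟪y, y⟫_A‖ := by simp [norm_smul]
    _ = ‖x‖ ^ 2 * ‖y‖ ^ 2 := by rw [norm_sq_eq (x := y)]
    _ = (‖x‖ * ‖y‖) ^ 2 := by rw [mul_pow]
  exact (pow_le_pow_iff_left₀ (norm_nonneg _) (by positivity) (by norm_num)).mp this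

lemma normedSpaceCore {A E : Type*} [NonUnitalCStarAlgebra A] [PartialOrder A]
    [StarOrderedRing A] [NormedAddCommGroup E] [Module ℂ E] [SMul Aᵐᵒᵖ E]
    [RightCStarModule A E] : NormedSpace.Core ℂ E where
  norm_nonneg _ := norm_nonneg _
  norm_eq_zero_iff _ := norm_eq_zero
  norm_smul c x := by
    rw [norm_eq_sqrt_norm_inner_self (A := A) (c • x), norm_eq_sqrt_norm_inner_self (A := A) x,
      inner_smul_left_complex, inner_smul_right_complex, smul_smul, norm_smul, norm_mul,
      norm_star, Real.sqrt_mul (by positivity), Real.sqrt_mul_self (norm_nonneg _)]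
  norm_triangle x y := norm_add_le x y

lemma continuous_inner : Continuous (fun x : E × E => ⟪x.1, x.2⟫_A) := by
  letI : NormedSpace ℂ E := .ofCore normedSpaceCore
  let L : E →L⋆[ℂ] E →L[ℂ] A :=
    LinearMap.mkContinuous₂ (innerSesq (A := A) (E := E)) 1 fun x y => by
      rw [one_mul]; exact norm_inner_le E
  have : (fun x : E × E => ⟪x.1, x.2⟫_A) = fun x => L x.1 x.2 := rfl
  rw [this]; fun_prop

end general

end RightCStarModule
end RegularOperators


section AuxDev
open RegularOperators
variable {A : Type*} [NonUnitalCStarAlgebra A] [PartialOrder A] [StarOrderedRing A]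
variable {E F : Type*}
  [NormedAddCommGroup E] [Module ℂ E] [SMul Aᵐᵒᵖ E] [RightCStarModule A E] [CompleteSpace E]
  [NormedAddCommGroup F] [Module ℂ F] [SMul Aᵐᵒᵖ F] [RightCStarModule A F] [CompleteSpace F]

namespace ROAux
set_option linter.unusedSectionVars false

noncomputable local instance instNSC (G : Type*) [NormedAddCommGroup G] [Module ℂ G]
    [SMul Aᵐᵒᵖ G] [RightCStarModule A G] : NormedSpace ℂ G := .ofCore RightCStarModule.normedSpaceCore

variable {G : Type*} [NormedAddCommGroup G] [Module ℂ G] [SMul Aᵐᵒᵖ G] [RightCStarModule A G]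

/-- continuity of inner in the first variable -/
lemma cont_inner_left (z : G) : Continuous fun w : G => ⟪w, z⟫_A := by
  have := RightCStarModule.continuous_inner (A := A) (E := G)
  fun_prop

lemma cont_inner_right (z : G) : Continuous fun w : G => ⟪z, w⟫_A := by
  have := RightCStarModule.continuous_inner (A := A) (E := G)
  fun_prop

/-- separation by a dense set -/
lemma eq_zero_of_dense_inner {D : Set G} (hd : Dense D) {z : G}
    (h : ∀ d ∈ D, ⟪d, z⟫_A = 0) : z = 0 := by
  rw [← RightCStarModule.inner_self (A := A) (x := z)]
  obtain ⟨u, hu, hlim⟩ := mem_closure_iff_seq_limit.mp (hd z)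
  have h1 : Filter.Tendsto (fun n => ⟪u n, z⟫_A) Filter.atTop (nhds ⟪z, z⟫_A) :=
    ((cont_inner_left z).tendsto z).comp hlim
  have h2 : (fun n => ⟪u n, z⟫_A) = fun _ => (0 : A) := funext fun n => h _ (hu n)
  rw [h2] at h1
  exact tendsto_nhds_unique h1 tendsto_const_nhds

/-- norm monotone square trick : from `‖a‖^2 ≤ ‖a‖ * b` conclude `‖a‖ ≤ b` -/
lemma norm_le_of_sq_le_mul {a b : ℝ} (ha : 0 ≤ a) (hb : 0 ≤ b) (h : a^2 ≤ a * b) : a ≤ b := by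
  rcases eq_or_lt_of_le ha with h0 | h0
  · linarith
  · nlinarith

lemma cauchySeq_of_control {X Y : Type*} [PseudoMetricSpace X] [PseudoMetricSpace Y]
    {f : ℕ → X} {g : ℕ → Y} (C : ℝ) (hf : CauchySeq f)
    (h : ∀ m n, dist (g m) (g n) ≤ C * dist (f m) (f n)) : CauchySeq g := by
  rcases le_or_gt C 0 with hC | hC
  · refine Metric.cauchySeq_iff.mpr fun ε hε => ⟨0, fun m _ n _ => ?_⟩
    have := h m n
    have : dist (g m) (g n) ≤ 0 :=
      this.trans (mul_nonpos_of_nonpos_of_nonneg hC dist_nonneg)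
    linarith
  · refine Metric.cauchySeq_iff.mpr fun ε hε => ?_
    obtain ⟨N, hN⟩ := Metric.cauchySeq_iff.mp hf (ε / C) (by positivity)
    exact ⟨N, fun m hm n hn => (h m n).trans_lt <| by
      have := hN m hm n hn
      calc C * dist (f m) (f n) < C * (ε / C) := by
            exact (mul_lt_mul_iff_right₀ hC).mpr this
        _ = ε := by field_simp⟩

section Ops
open Filter
variable {t : E →ₗ.[ℂ] F} {s : F →ₗ.[ℂ] E}

lemma star_inner_eq (h : IsAdjoint A t s) (x : t.domain) (y : s.domain) :
    ⟪(y : F), t x⟫_A = ⟪s y, (x : E)⟫_A := by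
  rw [← RightCStarModule.star_inner (t x), h.inner_eq, RightCStarModule.star_inner]

lemma eq_of_inner_dom (hd : Dense (t.domain : Set E)) {u v : E}
    (h : ∀ x : t.domain, ⟪(x : E), u⟫_A = ⟪(x : E), v⟫_A) : u = v := by
  have h0 : u - v = 0 := by
    refine eq_zero_of_dense_inner hd fun d hd' => ?_
    rw [RightCStarModule.inner_sub_right, h ⟨d, hd'⟩, sub_self]
  rw [← sub_eq_zero]; exact h0

lemma closed_t (hcl : IsClosed (t.graph : Set (E × F))) {x : ℕ → t.domain} {x₀ : E} {g : F}
    (hx : Tendsto (fun n => (x n : E)) atTop (nhds x₀))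
    (hg : Tendsto (fun n => t (x n)) atTop (nhds g)) :
    ∃ h : x₀ ∈ t.domain, t ⟨x₀, h⟩ = g := by
  have hmem : (x₀, g) ∈ (t.graph : Set (E × F)) := by
    refine hcl.mem_of_tendsto (hx.prodMk_nhds hg) ?_
    exact Eventually.of_forall fun n => t.mem_graph (x n)
  obtain ⟨y, hy1, hy2⟩ := t.mem_graph_iff.mp hmem
  have hy1' : (y : E) = x₀ := hy1
  refine ⟨hy1' ▸ y.2, ?_⟩
  have hxy : (⟨x₀, hy1' ▸ y.2⟩ : t.domain) = y := Subtype.ext hy1'.symm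
  rw [hxy]; exact hy2

lemma closed_s (hadj : IsAdjoint A t s) (hd : Dense (t.domain : Set E))
    {y : ℕ → s.domain} {y₀ : F} {z : E}
    (hy : Tendsto (fun n => (y n : F)) atTop (nhds y₀))
    (hz : Tendsto (fun n => s (y n)) atTop (nhds z)) :
    ∃ h : y₀ ∈ s.domain, s ⟨y₀, h⟩ = z := by
  have key : ∀ x : t.domain, ⟪t x, y₀⟫_A = ⟪(x : E), z⟫_A := by
    intro x
    have h1 : Tendsto (fun n => ⟪t x, (y n : F)⟫_A) atTop (nhds ⟪t x, y₀⟫_A) :=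
      ((cont_inner_right (t x)).tendsto y₀).comp hy
    have h2 : Tendsto (fun n => ⟪(x : E), s (y n)⟫_A) atTop (nhds ⟪(x : E), z⟫_A) :=
      ((cont_inner_right (x : E)).tendsto z).comp hz
    have h3 : (fun n => ⟪t x, (y n : F)⟫_A) = fun n => ⟪(x : E), s (y n)⟫_A :=
      funext fun n => hadj.inner_eq x (y n)
    rw [h3] at h1
    exact tendsto_nhds_unique h1 h2
  have hy₀ : y₀ ∈ s.domain := by
    have hmem : y₀ ∈ (s.domain : Set F) := by rw [hadj.dom]; exact ⟨z, key⟩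
    exact hmem
  refine ⟨hy₀, ?_⟩
  refine eq_of_inner_dom hd fun x => ?_
  rw [← hadj.inner_eq x ⟨y₀, hy₀⟩, key x]

lemma inner_key (hadj : IsAdjoint A t s) (x : t.domain) (h : t x ∈ s.domain) :
    ⟪(x : E), (x : E) + s ⟨t x, h⟩⟫_A = ⟪(x : E), (x : E)⟫_A + ⟪t x, t x⟫_A := by
  rw [RightCStarModule.inner_add_right]
  congr 1
  exact (hadj.inner_eq x ⟨t x, h⟩).symm

lemma norm_le_onePlus (hadj : IsAdjoint A t s) (x : t.domain) (h : t x ∈ s.domain) :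
    ‖(x : E)‖ ≤ ‖(x : E) + s ⟨t x, h⟩‖ ∧ ‖t x‖ ≤ ‖(x : E) + s ⟨t x, h⟩‖ := by
  set e := (x : E) + s ⟨t x, h⟩ with he
  have hkey : ⟪(x : E), e⟫_A = ⟪(x : E), (x : E)⟫_A + ⟪t x, t x⟫_A := inner_key hadj x h
  have h1 : ‖⟪(x : E), (x : E)⟫_A‖ ≤ ‖⟪(x : E), e⟫_A‖ := by
    rw [hkey]
    exact CStarAlgebra.norm_le_norm_of_nonneg_of_le RightCStarModule.inner_self_nonneg
      (le_add_of_nonneg_right RightCStarModule.inner_self_nonneg)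
  have h2 : ‖⟪t x, t x⟫_A‖ ≤ ‖⟪(x : E), e⟫_A‖ := by
    rw [hkey]
    exact CStarAlgebra.norm_le_norm_of_nonneg_of_le RightCStarModule.inner_self_nonneg
      (le_add_of_nonneg_left RightCStarModule.inner_self_nonneg)
  have hCS : ‖⟪(x : E), e⟫_A‖ ≤ ‖(x : E)‖ * ‖e‖ := RightCStarModule.norm_inner_le E
  have hxe : ‖(x : E)‖ ≤ ‖e‖ := by
    refine norm_le_of_sq_le_mul (norm_nonneg _) (norm_nonneg _) ?_
    calc ‖(x : E)‖^2 = ‖⟪(x : E), (x : E)⟫_A‖ := RightCStarModule.norm_sq_eq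
      _ ≤ ‖(x : E)‖ * ‖e‖ := h1.trans hCS
  refine ⟨hxe, ?_⟩
  have htx : ‖t x‖^2 ≤ ‖e‖^2 := by
    calc ‖t x‖^2 = ‖⟪t x, t x⟫_A‖ := RightCStarModule.norm_sq_eq
      _ ≤ ‖(x : E)‖ * ‖e‖ := h2.trans hCS
      _ ≤ ‖e‖ * ‖e‖ := mul_le_mul_of_nonneg_right hxe (norm_nonneg _)
      _ = ‖e‖^2 := (sq ‖e‖).symm
  exact (pow_le_pow_iff_left₀ (norm_nonneg _) (norm_nonneg _) (by norm_num)).mp htx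

lemma onePlus_sub (x y : t.domain) (h1 : t x ∈ s.domain) (h2 : t y ∈ s.domain) :
    ∃ h3 : t (x - y) ∈ s.domain,
      ((x - y : t.domain) : E) + s ⟨t (x - y), h3⟩ =
        ((x : E) + s ⟨t x, h1⟩) - ((y : E) + s ⟨t y, h2⟩) := by
  have hsub : t (x - y) = t x - t y := t.map_sub x y
  have h3 : t (x - y) ∈ s.domain := by rw [hsub]; exact Submodule.sub_mem _ h1 h2
  refine ⟨h3, ?_⟩
  have hsubty : (⟨t (x - y), h3⟩ : s.domain) = ⟨t x, h1⟩ - ⟨t y, h2⟩ := by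
    apply Subtype.ext; simp [hsub]
  rw [hsubty, s.map_sub]
  show (x : E) - (y : E) + (s ⟨t x, h1⟩ - s ⟨t y, h2⟩) = _
  abel

lemma onePlus_surj (ht : IsRegular A t s) (e : E) :
    ∃ (x : t.domain) (h : t x ∈ s.domain), (x : E) + s ⟨t x, h⟩ = e := by
  obtain ⟨u, hu, hlim⟩ := mem_closure_iff_seq_limit.mp (ht.denseOnePlusRange e)
  choose x hx hsum using hu
  have hu_cauchy : CauchySeq u := hlim.cauchySeq
  have hdiff : ∀ m n : ℕ, ‖(x m : E) - (x n : E)‖ ≤ ‖u m - u n‖ ∧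
      ‖t (x m) - t (x n)‖ ≤ ‖u m - u n‖ := by
    intro m n
    obtain ⟨h3, heq⟩ := onePlus_sub (x m) (x n) (hx m) (hx n)
    rw [hsum m, hsum n] at heq
    have := norm_le_onePlus ht.adj (x m - x n) h3
    rw [heq] at this
    constructor
    · simpa using this.1
    · have h4 : t (x m - x n) = t (x m) - t (x n) := t.map_sub _ _
      rw [h4] at this
      exact this.2
  have hxc : CauchySeq (fun n => (x n : E)) := by
    refine cauchySeq_of_control 1 hu_cauchy fun m n => ?_
    rw [dist_eq_norm, dist_eq_norm, one_mul]
    exact (hdiff m n).1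
  have htc : CauchySeq (fun n => t (x n)) := by
    refine cauchySeq_of_control 1 hu_cauchy fun m n => ?_
    rw [dist_eq_norm, dist_eq_norm, one_mul]
    exact (hdiff m n).2
  obtain ⟨x₀, hx₀⟩ := cauchySeq_tendsto_of_complete hxc
  obtain ⟨g, hg⟩ := cauchySeq_tendsto_of_complete htc
  obtain ⟨hdom, hval⟩ := closed_t ht.closedGraph hx₀ hg
  have hslim : Filter.Tendsto (fun n => s ⟨t (x n), hx n⟩) Filter.atTop (nhds (e - x₀)) := by
    have : (fun n => s ⟨t (x n), hx n⟩) = fun n => u n - (x n : E) := by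
      funext n; rw [← hsum n]; abel
    rw [this]
    exact hlim.sub hx₀
  have hyc : Filter.Tendsto (fun n => ((⟨t (x n), hx n⟩ : s.domain) : F)) Filter.atTop
      (nhds (t ⟨x₀, hdom⟩)) := by
    simpa [hval] using hg
  obtain ⟨hdom2, hval2⟩ := closed_s ht.adj ht.denseDom hyc hslim
  refine ⟨⟨x₀, hdom⟩, ?_, ?_⟩
  · rw [hval]; exact hval ▸ hdom2
  · rw [hval2]; abel

lemma max_bound {a b K : ℝ} (ha : 0 ≤ a) (hb : 0 ≤ b) (hK : 0 ≤ K)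
    (h1 : a^2 ≤ K * max a b) (h2 : b^2 ≤ K * max a b) : a ≤ K ∧ b ≤ K := by
  rcases le_total a b with h | h
  · have hbK : b ≤ K := by
      refine norm_le_of_sq_le_mul hb hK ?_; rwa [max_eq_right h, mul_comm] at h2
    exact ⟨h.trans hbK, hbK⟩
  · have haK : a ≤ K := by
      refine norm_le_of_sq_le_mul ha hK ?_; rwa [max_eq_left h, mul_comm] at h1
    exact ⟨haK, h.trans haK⟩

lemma decomp_bounds (hadj : IsAdjoint A t s) (x : t.domain) (y : s.domain) :
    ‖(x : E)‖ ≤ ‖(x : E) - s y‖ + ‖t x + (y : F)‖ ∧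
    ‖t x‖ ≤ ‖(x : E) - s y‖ + ‖t x + (y : F)‖ ∧
    ‖(y : F)‖ ≤ ‖(x : E) - s y‖ + ‖t x + (y : F)‖ ∧
    ‖s y‖ ≤ ‖(x : E) - s y‖ + ‖t x + (y : F)‖ := by
  set e' := (x : E) - s y with he'
  set f' := t x + (y : F) with hf'
  set K := ‖e'‖ + ‖f'‖ with hK
  have hK0 : 0 ≤ K := add_nonneg (norm_nonneg _) (norm_nonneg _)
  have id1 : ⟪e', (x : E)⟫_A + ⟪f', t x⟫_A = ⟪(x : E), (x : E)⟫_A + ⟪t x, t x⟫_A := by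
    rw [he', hf', RightCStarModule.inner_sub_left, RightCStarModule.inner_add_left,
      star_inner_eq hadj x y]
    abel
  have id2 : ⟪e', -(s y)⟫_A + ⟪f', (y : F)⟫_A = ⟪s y, s y⟫_A + ⟪(y : F), (y : F)⟫_A := by
    rw [he', hf', RightCStarModule.inner_sub_left, RightCStarModule.inner_add_left,
      RightCStarModule.inner_neg_right, RightCStarModule.inner_neg_right, hadj.inner_eq x y]
    abel
  have bnd1 : ∀ w : E, ‖⟪e', w⟫_A‖ ≤ ‖e'‖ * ‖w‖ := fun w => RightCStarModule.norm_inner_le E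
  have bnd2 : ∀ w : F, ‖⟪f', w⟫_A‖ ≤ ‖f'‖ * ‖w‖ := fun w => RightCStarModule.norm_inner_le F
  -- first pair
  have hxt : ‖(x : E)‖ ≤ K ∧ ‖t x‖ ≤ K := by
    set M := max ‖(x : E)‖ ‖t x‖ with hM
    have hcomm : ‖⟪e', (x : E)⟫_A + ⟪f', t x⟫_A‖ ≤ K * M := by
      calc ‖⟪e', (x : E)⟫_A + ⟪f', t x⟫_A‖ ≤ ‖⟪e', (x : E)⟫_A‖ + ‖⟪f', t x⟫_A‖ :=
            norm_add_le _ _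
        _ ≤ ‖e'‖ * ‖(x : E)‖ + ‖f'‖ * ‖t x‖ := add_le_add (bnd1 _) (bnd2 _)
        _ ≤ ‖e'‖ * M + ‖f'‖ * M := add_le_add
            (mul_le_mul_of_nonneg_left (le_max_left _ _) (norm_nonneg _))
            (mul_le_mul_of_nonneg_left (le_max_right _ _) (norm_nonneg _))
        _ = K * M := by rw [hK]; ring
    refine max_bound (norm_nonneg _) (norm_nonneg _) hK0 ?_ ?_
    · calc ‖(x : E)‖^2 = ‖⟪(x : E), (x : E)⟫_A‖ := RightCStarModule.norm_sq_eq
        _ ≤ ‖⟪(x : E), (x : E)⟫_A + ⟪t x, t x⟫_A‖ :=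
            CStarAlgebra.norm_le_norm_of_nonneg_of_le RightCStarModule.inner_self_nonneg
              (le_add_of_nonneg_right RightCStarModule.inner_self_nonneg)
        _ = ‖⟪e', (x : E)⟫_A + ⟪f', t x⟫_A‖ := by rw [id1]
        _ ≤ K * M := hcomm
    · calc ‖t x‖^2 = ‖⟪t x, t x⟫_A‖ := RightCStarModule.norm_sq_eq
        _ ≤ ‖⟪(x : E), (x : E)⟫_A + ⟪t x, t x⟫_A‖ :=
            CStarAlgebra.norm_le_norm_of_nonneg_of_le RightCStarModule.inner_self_nonneg
              (le_add_of_nonneg_left RightCStarModule.inner_self_nonneg)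
        _ = ‖⟪e', (x : E)⟫_A + ⟪f', t x⟫_A‖ := by rw [id1]
        _ ≤ K * M := hcomm
  have hys : ‖(y : F)‖ ≤ K ∧ ‖s y‖ ≤ K := by
    set M := max ‖s y‖ ‖(y : F)‖ with hM
    have hcomm : ‖⟪e', -(s y)⟫_A + ⟪f', (y : F)⟫_A‖ ≤ K * M := by
      calc ‖⟪e', -(s y)⟫_A + ⟪f', (y : F)⟫_A‖
          ≤ ‖⟪e', -(s y)⟫_A‖ + ‖⟪f', (y : F)⟫_A‖ := norm_add_le _ _
        _ ≤ ‖e'‖ * ‖-(s y)‖ + ‖f'‖ * ‖(y : F)‖ := add_le_add (bnd1 _) (bnd2 _)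
        _ = ‖e'‖ * ‖s y‖ + ‖f'‖ * ‖(y : F)‖ := by rw [norm_neg]
        _ ≤ ‖e'‖ * M + ‖f'‖ * M := add_le_add
            (mul_le_mul_of_nonneg_left (le_max_left _ _) (norm_nonneg _))
            (mul_le_mul_of_nonneg_left (le_max_right _ _) (norm_nonneg _))
        _ = K * M := by rw [hK]; ring
    have hb := max_bound (a := ‖s y‖) (b := ‖(y : F)‖) (norm_nonneg _) (norm_nonneg _) hK0
      (by calc ‖s y‖^2 = ‖⟪s y, s y⟫_A‖ := RightCStarModule.norm_sq_eq
            _ ≤ ‖⟪s y, s y⟫_A + ⟪(y : F), (y : F)⟫_A‖ :=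
                CStarAlgebra.norm_le_norm_of_nonneg_of_le RightCStarModule.inner_self_nonneg
                  (le_add_of_nonneg_right RightCStarModule.inner_self_nonneg)
            _ = ‖⟪e', -(s y)⟫_A + ⟪f', (y : F)⟫_A‖ := by rw [id2]
            _ ≤ K * M := hcomm)
      (by calc ‖(y : F)‖^2 = ‖⟪(y : F), (y : F)⟫_A‖ := RightCStarModule.norm_sq_eq
            _ ≤ ‖⟪s y, s y⟫_A + ⟪(y : F), (y : F)⟫_A‖ :=
                CStarAlgebra.norm_le_norm_of_nonneg_of_le RightCStarModule.inner_self_nonneg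
                  (le_add_of_nonneg_left RightCStarModule.inner_self_nonneg)
            _ = ‖⟪e', -(s y)⟫_A + ⟪f', (y : F)⟫_A‖ := by rw [id2]
            _ ≤ K * M := hcomm)
    exact ⟨hb.2, hb.1⟩
  exact ⟨hxt.1, hxt.2, hys.1, hys.2⟩

/-- the fundamental decomposition `E ⊕ F = G(t) ⊕ V G(s)` -/
lemma graph_decomp (ht : IsRegular A t s) (e : E) (f : F) :
    ∃ (x : t.domain) (y : s.domain), e = (x : E) - s y ∧ f = t x + (y : F) := by
  classical
  set S : Set (E × F) :=
    {p | ∃ (x : t.domain) (y : s.domain), p = ((x : E) - s y, t x + (y : F))} with hS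
  have hS_add : ∀ p ∈ S, ∀ q ∈ S, p + q ∈ S := by
    rintro p ⟨x1, y1, rfl⟩ q ⟨x2, y2, rfl⟩
    refine ⟨x1 + x2, y1 + y2, ?_⟩
    have h1 : s (y1 + y2) = s y1 + s y2 := s.map_add y1 y2
    have h2 : t (x1 + x2) = t x1 + t x2 := t.map_add x1 x2
    apply Prod.ext <;> simp [h1, h2] <;> abel
  -- closure S ⊆ S
  have hS_closed : ∀ p ∈ closure S, p ∈ S := by
    intro p hp
    obtain ⟨q, hq, hqlim⟩ := mem_closure_iff_seq_limit.mp hp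
    choose x y hrep using hq
    have hq_cauchy : CauchySeq q := hqlim.cauchySeq
    have hctl : ∀ m n : ℕ,
        ‖((x m : E) - (x n : E))‖ ≤ 2 * dist (q m) (q n) ∧
        ‖t (x m) - t (x n)‖ ≤ 2 * dist (q m) (q n) ∧
        ‖((y m : F) - (y n : F))‖ ≤ 2 * dist (q m) (q n) ∧
        ‖s (y m) - s (y n)‖ ≤ 2 * dist (q m) (q n) := by
      intro m n
      have hxsub : t (x m - x n) = t (x m) - t (x n) := t.map_sub _ _
      have hysub : s (y m - y n) = s (y m) - s (y n) := s.map_sub _ _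
      have hb := decomp_bounds ht.adj (x m - x n) (y m - y n)
      have he1 : ((x m - x n : t.domain) : E) - s (y m - y n) = (q m - q n).1 := by
        rw [hysub, hrep m, hrep n, Prod.fst_sub]; push_cast; abel
      have he2 : t (x m - x n) + ((y m - y n : s.domain) : F) = (q m - q n).2 := by
        rw [hxsub, hrep m, hrep n, Prod.snd_sub]; push_cast; abel
      rw [he1, he2, hxsub, hysub] at hb
      have hnorm : ‖(q m - q n).1‖ + ‖(q m - q n).2‖ ≤ 2 * dist (q m) (q n) := by
        rw [dist_eq_norm]
        have h1 : ‖(q m - q n).1‖ ≤ ‖q m - q n‖ := norm_fst_le _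
        have h2 : ‖(q m - q n).2‖ ≤ ‖q m - q n‖ := norm_snd_le _
        linarith
      push_cast at hb
      exact ⟨hb.1.trans hnorm, hb.2.1.trans hnorm, hb.2.2.1.trans hnorm, hb.2.2.2.trans hnorm⟩
    have hdq : ∀ m n : ℕ, dist (q m) (q n) = dist (q m) (q n) := fun _ _ => rfl
    have c1 : CauchySeq (fun n => (x n : E)) :=
      cauchySeq_of_control 2 hq_cauchy fun m n => by
        rw [dist_eq_norm]; exact (hctl m n).1
    have c2 : CauchySeq (fun n => t (x n)) :=
      cauchySeq_of_control 2 hq_cauchy fun m n => by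
        rw [dist_eq_norm]; exact (hctl m n).2.1
    have c3 : CauchySeq (fun n => (y n : F)) :=
      cauchySeq_of_control 2 hq_cauchy fun m n => by
        rw [dist_eq_norm]; exact (hctl m n).2.2.1
    have c4 : CauchySeq (fun n => s (y n)) :=
      cauchySeq_of_control 2 hq_cauchy fun m n => by
        rw [dist_eq_norm]; exact (hctl m n).2.2.2
    obtain ⟨x₀, hx₀⟩ := cauchySeq_tendsto_of_complete c1
    obtain ⟨g1, hg1⟩ := cauchySeq_tendsto_of_complete c2
    obtain ⟨y₀, hy₀⟩ := cauchySeq_tendsto_of_complete c3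
    obtain ⟨g2, hg2⟩ := cauchySeq_tendsto_of_complete c4
    obtain ⟨hxdom, hxval⟩ := closed_t ht.closedGraph hx₀ hg1
    obtain ⟨hydom, hyval⟩ := closed_s ht.adj ht.denseDom hy₀ hg2
    have hlim1 : Tendsto (fun n => (q n).1) atTop (nhds (x₀ - g2)) := by
      have : (fun n => (q n).1) = fun n => (x n : E) - s (y n) := by
        funext n; rw [hrep n]
      rw [this]; exact hx₀.sub hg2
    have hlim2 : Tendsto (fun n => (q n).2) atTop (nhds (g1 + y₀)) := by
      have : (fun n => (q n).2) = fun n => t (x n) + (y n : F) := by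
        funext n; rw [hrep n]
      rw [this]; exact hg1.add hy₀
    have hp1 : p.1 = x₀ - g2 :=
      tendsto_nhds_unique ((continuous_fst.tendsto p).comp hqlim) hlim1
    have hp2 : p.2 = g1 + y₀ :=
      tendsto_nhds_unique ((continuous_snd.tendsto p).comp hqlim) hlim2
    refine ⟨⟨x₀, hxdom⟩, ⟨y₀, hydom⟩, ?_⟩
    apply Prod.ext
    · rw [hp1, hyval]
    · rw [hp2, hxval]
  -- density pieces
  have hmem1 : ∀ e₀ : E, (e₀, (0 : F)) ∈ S := by
    intro e₀
    obtain ⟨x, h, hsum⟩ := onePlus_surj ht e₀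
    refine ⟨x, -⟨t x, h⟩, ?_⟩
    have h1 : s (-(⟨t x, h⟩ : s.domain)) = -(s ⟨t x, h⟩) := s.map_neg _
    apply Prod.ext
    · show e₀ = (x : E) - s (-(⟨t x, h⟩ : s.domain))
      rw [h1, sub_neg_eq_add, hsum]
    · show (0 : F) = t x + ((-(⟨t x, h⟩ : s.domain) : s.domain) : F)
      push_cast
      abel
  have hmem2 : ∀ (e₀ : E) (y₀ : s.domain), (e₀, (y₀ : F)) ∈ S := by
    intro e₀ y₀
    have hA : ((e₀ + s y₀, (0 : F)) : E × F) ∈ S := hmem1 _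
    have hB : ((-(s y₀), (y₀ : F)) : E × F) ∈ S := by
      refine ⟨0, y₀, ?_⟩
      have h0 : t (0 : t.domain) = 0 := t.toFun.map_zero
      apply Prod.ext <;> simp [h0]
    have := hS_add _ hA _ hB
    simpa using this
  have hdense : Dense S := by
    have hTsub : (Set.univ ×ˢ (s.domain : Set F)) ⊆ S := by
      rintro ⟨e₀, f₀⟩ ⟨-, hf₀⟩
      exact hmem2 e₀ ⟨f₀, hf₀⟩
    have hT : Dense (Set.univ ×ˢ (s.domain : Set F)) := (dense_univ (X := E)).prod ht.denseAdjDom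
    exact fun p => closure_mono hTsub (hT p)
  have : (e, f) ∈ S := hS_closed _ (by rw [hdense.closure_eq]; trivial)
  obtain ⟨x, y, hxy⟩ := this
  exact ⟨x, y, congrArg Prod.fst hxy, congrArg Prod.snd hxy⟩

lemma onePlusTS_surj (ht : IsRegular A t s) (f : F) :
    ∃ (y : s.domain) (h : s y ∈ t.domain), (y : F) + t ⟨s y, h⟩ = f := by
  obtain ⟨x, y, he, hf⟩ := graph_decomp ht 0 f
  have hxy : (x : E) = s y := by rw [← sub_eq_zero]; exact he.symm
  have h : s y ∈ t.domain := hxy ▸ x.2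
  refine ⟨y, h, ?_⟩
  have hsub : (⟨s y, h⟩ : t.domain) = x := Subtype.ext hxy.symm
  rw [hsub, hf]; abel

lemma onePlusTS_uniq (hadj : IsAdjoint A t s) (y : s.domain) (h : s y ∈ t.domain)
    (hz : (y : F) + t ⟨s y, h⟩ = 0) : (y : F) = 0 := by
  have hkey : ⟪(y : F), (y : F) + t ⟨s y, h⟩⟫_A
      = ⟪(y : F), (y : F)⟫_A + ⟪s y, s y⟫_A := by
    rw [RightCStarModule.inner_add_right]
    congr 1
    exact star_inner_eq hadj ⟨s y, h⟩ y
  rw [hz, RightCStarModule.inner_zero_right] at hkey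
  have h2 : ‖⟪(y : F), (y : F)⟫_A‖ ≤ ‖⟪(y : F), (y : F)⟫_A + ⟪s y, s y⟫_A‖ :=
    CStarAlgebra.norm_le_norm_of_nonneg_of_le RightCStarModule.inner_self_nonneg
      (le_add_of_nonneg_right RightCStarModule.inner_self_nonneg)
  rw [← hkey, norm_zero] at h2
  have h3 : ⟪(y : F), (y : F)⟫_A = 0 :=
    norm_eq_zero.mp (le_antisymm h2 (norm_nonneg _))
  exact (RightCStarModule.inner_self (A := A)).mp h3


lemma mem_dom_t_of_adj (ht : IsRegular A t s) {u : E} {z : F}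
    (h : ∀ y : s.domain, ⟪s y, u⟫_A = ⟪(y : F), z⟫_A) :
    ∃ hu : u ∈ t.domain, t ⟨u, hu⟩ = z := by
  obtain ⟨x, y, he, hf⟩ := graph_decomp ht u z
  have h1 : ⟪s y, u⟫_A = ⟪(y : F), z⟫_A := h y
  rw [he, hf, RightCStarModule.inner_sub_right, RightCStarModule.inner_add_right,
    star_inner_eq ht.adj x y, sub_eq_add_neg] at h1
  have h6 : -⟪s y, s y⟫_A = ⟪(y : F), (y : F)⟫_A := add_left_cancel h1
  have h7 : ⟪(y : F), (y : F)⟫_A = 0 := by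
    refine le_antisymm ?_ RightCStarModule.inner_self_nonneg
    rw [← h6]
    exact neg_nonpos_of_nonneg RightCStarModule.inner_self_nonneg
  have hy0 : y = 0 := Subtype.ext ((RightCStarModule.inner_self (A := A)).mp h7)
  have hsy : s y = 0 := by rw [hy0]; exact s.toFun.map_zero
  have hxu : (x : E) = u := by rw [he, hsy, sub_zero]
  refine ⟨hxu ▸ x.2, ?_⟩
  have hsub : (⟨u, hxu ▸ x.2⟩ : t.domain) = x := Subtype.ext hxu.symm
  rw [hsub, hf, hy0]
  simp

lemma regular_symm (ht : IsRegular A t s) : IsRegular A s t := by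
  have hadj_st : IsAdjoint A s t := by
    constructor
    · refine Set.Subset.antisymm ?_ ?_
      · intro u hu
        exact ⟨t ⟨u, hu⟩, fun y => (star_inner_eq ht.adj ⟨u, hu⟩ y).symm⟩
      · rintro u ⟨z, hz⟩
        obtain ⟨hud, -⟩ := mem_dom_t_of_adj ht hz
        exact hud
    · intro y x
      exact (star_inner_eq ht.adj x y).symm
  have hamod : AModuleMap A s := by
    intro a y
    have hmem : (y : F) <• a ∈ s.domain := by
      have hmem' : ((y : F) <• a) ∈ (s.domain : Set F) := by
        rw [ht.adj.dom]
        refine ⟨(s y) <• a, fun x => ?_⟩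
        rw [RightCStarModule.inner_op_smul_right, ht.adj.inner_eq x y,
          ← RightCStarModule.inner_op_smul_right]
      exact hmem'
    refine ⟨hmem, ?_⟩
    refine eq_of_inner_dom ht.denseDom fun x => ?_
    rw [← ht.adj.inner_eq x ⟨(y : F) <• a, hmem⟩]
    show ⟪t x, (y : F) <• a⟫_A = ⟪(x : E), (s y) <• a⟫_A
    rw [RightCStarModule.inner_op_smul_right, ht.adj.inner_eq x y,
      RightCStarModule.inner_op_smul_right]
  have hclosed : IsClosed (s.graph : Set (F × E)) := by
    refine isClosed_of_closure_subset fun p hp => ?_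
    obtain ⟨g, hg, hglim⟩ := mem_closure_iff_seq_limit.mp hp
    choose y hy1 hy2 using fun n => s.mem_graph_iff.mp (hg n)
    have hfst : Tendsto (fun n => ((y n : F))) atTop (nhds p.1) := by
      have he : (fun n => ((y n : F))) = fun n => (g n).1 := funext fun n => hy1 n
      rw [he]; exact (continuous_fst.tendsto p).comp hglim
    have hsnd : Tendsto (fun n => s (y n)) atTop (nhds p.2) := by
      have he : (fun n => s (y n)) = fun n => (g n).2 := funext fun n => hy2 n
      rw [he]; exact (continuous_snd.tendsto p).comp hglim
    obtain ⟨hd, hv⟩ := closed_s ht.adj ht.denseDom hfst hsnd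
    have : p ∈ s.graph := s.mem_graph_iff.mpr ⟨⟨p.1, hd⟩, rfl, hv⟩
    exact this
  have hone : Dense (onePlusRange s t) := by
    have huniv : onePlusRange s t = Set.univ := Set.eq_univ_of_forall fun f => by
      obtain ⟨y, h, hsum⟩ := onePlusTS_surj ht f
      exact ⟨y, h, hsum⟩
    rw [huniv]; exact dense_univ
  exact ⟨hamod, ht.denseAdjDom, hclosed, hadj_st, ht.denseDom, hone⟩

/-- range of `t* t` -/
def stRanSet (t : E →ₗ.[ℂ] F) (s : F →ₗ.[ℂ] E) : Set E :=
  {u | ∃ (x : t.domain) (h : t x ∈ s.domain), s ⟨t x, h⟩ = u}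

lemma sol_sub (hadj : IsAdjoint A t s) {f₁ f₂ : F} {w₁ w₂ : s.domain}
    (h₁ : s w₁ ∈ t.domain) (h₂ : s w₂ ∈ t.domain)
    (e₁ : (w₁ : F) + t ⟨s w₁, h₁⟩ = f₁) (e₂ : (w₂ : F) + t ⟨s w₂, h₂⟩ = f₂) :
    ∃ h₃ : s (w₁ - w₂) ∈ t.domain,
      ((w₁ - w₂ : s.domain) : F) + t ⟨s (w₁ - w₂), h₃⟩ = f₁ - f₂ := by
  have hsub : s (w₁ - w₂) = s w₁ - s w₂ := s.map_sub _ _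
  have h₃ : s (w₁ - w₂) ∈ t.domain := by rw [hsub]; exact sub_mem h₁ h₂
  refine ⟨h₃, ?_⟩
  have hsubty : (⟨s (w₁ - w₂), h₃⟩ : t.domain) = ⟨s w₁, h₁⟩ - ⟨s w₂, h₂⟩ := by
    apply Subtype.ext; simp [hsub]
  rw [hsubty, t.map_sub, ← e₁, ← e₂]
  push_cast
  abel

lemma sol_uniq (hadj : IsAdjoint A t s) {f : F} {w₁ w₂ : s.domain}
    (h₁ : s w₁ ∈ t.domain) (h₂ : s w₂ ∈ t.domain)
    (e₁ : (w₁ : F) + t ⟨s w₁, h₁⟩ = f) (e₂ : (w₂ : F) + t ⟨s w₂, h₂⟩ = f) : w₁ = w₂ := by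
  obtain ⟨h₃, e₃⟩ := sol_sub hadj h₁ h₂ e₁ e₂
  rw [sub_self] at e₃
  have := onePlusTS_uniq hadj (w₁ - w₂) h₃ e₃
  have h4 : w₁ - w₂ = 0 := Subtype.ext (by push_cast at this ⊢; exact this)
  rwa [sub_eq_zero] at h4

lemma sol_bound (hadj : IsAdjoint A t s) {f : F} {w : s.domain} (h : s w ∈ t.domain)
    (e : (w : F) + t ⟨s w, h⟩ = f) : ‖(w : F)‖ ≤ ‖f‖ := by
  have hkey : ⟪(w : F), f⟫_A = ⟪(w : F), (w : F)⟫_A + ⟪s w, s w⟫_A := by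
    rw [← e, RightCStarModule.inner_add_right]
    congr 1
    exact star_inner_eq hadj ⟨s w, h⟩ w
  refine norm_le_of_sq_le_mul (norm_nonneg _) (norm_nonneg _) ?_
  calc ‖(w : F)‖^2 = ‖⟪(w : F), (w : F)⟫_A‖ := RightCStarModule.norm_sq_eq
    _ ≤ ‖⟪(w : F), f⟫_A‖ := by
        rw [hkey]
        exact CStarAlgebra.norm_le_norm_of_nonneg_of_le RightCStarModule.inner_self_nonneg
          (le_add_of_nonneg_right RightCStarModule.inner_self_nonneg)
    _ ≤ ‖(w : F)‖ * ‖f‖ := RightCStarModule.norm_inner_le F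

noncomputable def rmap (ht : IsRegular A t s) (f : F) : s.domain :=
  (onePlusTS_surj ht f).choose

lemma rmap_mem (ht : IsRegular A t s) (f : F) : s (rmap ht f) ∈ t.domain :=
  (onePlusTS_surj ht f).choose_spec.choose

lemma rmap_eq (ht : IsRegular A t s) (f : F) :
    ((rmap ht f : s.domain) : F) + t ⟨s (rmap ht f), rmap_mem ht f⟩ = f :=
  (onePlusTS_surj ht f).choose_spec.choose_spec

lemma rmap_lip (ht : IsRegular A t s) (f₁ f₂ : F) :
    ‖((rmap ht f₁ : s.domain) : F) - ((rmap ht f₂ : s.domain) : F)‖ ≤ ‖f₁ - f₂‖ := by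
  obtain ⟨h₃, e₃⟩ := sol_sub ht.adj (rmap_mem ht f₁) (rmap_mem ht f₂)
    (rmap_eq ht f₁) (rmap_eq ht f₂)
  have := sol_bound ht.adj h₃ e₃
  simpa using this

lemma resolvent_surj (ht : IsRegular A t s) {lam : ℝ} (h0 : 0 < lam) (h1 : lam ≤ 1) (f : F) :
    ∃ (w : s.domain) (h : s w ∈ t.domain), (lam : ℂ) • (w : F) + t ⟨s w, h⟩ = f := by
  set Φ : F → F := fun v => f + ((1 : ℂ) - (lam : ℂ)) • ((rmap ht v : s.domain) : F) with hΦ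
  have hcoef : ‖(1 : ℂ) - (lam : ℂ)‖ = 1 - lam := by
    have : (1 : ℂ) - (lam : ℂ) = ((1 - lam : ℝ) : ℂ) := by push_cast; ring
    rw [this, Complex.norm_real, Real.norm_eq_abs, abs_of_nonneg (by linarith)]
  have hlip : LipschitzWith (Real.toNNReal (1 - lam)) Φ := by
    refine LipschitzWith.of_dist_le_mul fun v v' => ?_
    rw [dist_eq_norm, dist_eq_norm]
    have harr : Φ v - Φ v' = ((1 : ℂ) - (lam : ℂ)) •
        (((rmap ht v : s.domain) : F) - ((rmap ht v' : s.domain) : F)) := by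
      rw [hΦ, smul_sub]; beta_reduce; abel
    rw [harr, norm_smul, hcoef]
    have hcnn : (Real.toNNReal (1 - lam) : ℝ) = 1 - lam :=
      Real.coe_toNNReal _ (by linarith)
    rw [hcnn]
    exact mul_le_mul_of_nonneg_left (rmap_lip ht v v') (by linarith)
  have hcontr : ContractingWith (Real.toNNReal (1 - lam)) Φ := by
    refine ⟨?_, hlip⟩
    have : (Real.toNNReal (1 - lam) : ℝ) < 1 := by
      rw [Real.coe_toNNReal _ (by linarith)]; linarith
    exact_mod_cast this
  haveI : Nonempty F := ⟨0⟩
  set v := ContractingWith.fixedPoint Φ hcontr with hv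
  have hfix : Φ v = v := hcontr.fixedPoint_isFixedPt
  set w := rmap ht v with hw
  refine ⟨w, rmap_mem ht v, ?_⟩
  have hre : (w : F) + t ⟨s w, rmap_mem ht v⟩ = v := rmap_eq ht v
  have h2 : t ⟨s w, rmap_mem ht v⟩ = v - (w : F) := eq_sub_of_add_eq' hre
  rw [h2, ← hfix]
  show (lam : ℂ) • (w : F) + (f + ((1 : ℂ) - (lam : ℂ)) • (w : F) - (w : F)) = f
  have harith : (lam : ℂ) • (w : F) + (((1 : ℂ) - (lam : ℂ)) • (w : F) - (w : F)) = 0 := by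
    rw [sub_smul, one_smul]
    abel
  calc (lam : ℂ) • (w : F) + (f + ((1 : ℂ) - (lam : ℂ)) • (w : F) - (w : F))
      = f + ((lam : ℂ) • (w : F) + (((1 : ℂ) - (lam : ℂ)) • (w : F) - (w : F))) := by abel
    _ = f := by rw [harith, add_zero]

lemma res_approx (ht : IsRegular A t s) (y : s.domain) :
    s y ∈ closure (stRanSet t s) := by
  rw [Metric.mem_closure_iff]
  intro ε hε
  set B := ‖(y : F)‖^2 + 1 with hB
  have hB0 : 0 < B := by positivity
  set lam := min 1 (ε^2 / (2 * B)) with hlam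
  have h0 : 0 < lam := lt_min one_pos (by positivity)
  have h1 : lam ≤ 1 := min_le_left _ _
  have hsmall : lam * ‖(y : F)‖^2 < ε^2 := by
    have h2 : lam ≤ ε^2 / (2 * B) := min_le_right _ _
    have h3 : lam * ‖(y : F)‖^2 ≤ (ε^2 / (2 * B)) * ‖(y : F)‖^2 :=
      mul_le_mul_of_nonneg_right h2 (by positivity)
    have h4 : (ε^2 / (2 * B)) * ‖(y : F)‖^2 < ε^2 := by
      rw [div_mul_eq_mul_div, div_lt_iff₀ (by positivity)]
      nlinarith [sq_nonneg ε, norm_nonneg (y : F)]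
    linarith
  obtain ⟨w, h, heq⟩ := resolvent_surj ht h0 h1 (y : F)
  -- t ⟨s w, h⟩ ∈ s.domain
  have hv : t ⟨s w, h⟩ = (y : F) - (lam : ℂ) • (w : F) := by rw [← heq]; abel
  have htx : t ⟨s w, h⟩ ∈ s.domain := by
    rw [hv]; exact sub_mem y.2 (Submodule.smul_mem _ _ w.2)
  have hsubty : (⟨t ⟨s w, h⟩, htx⟩ : s.domain) = y - (lam : ℂ) • w := by
    apply Subtype.ext; push_cast; rw [hv]
  have hval : s ⟨t ⟨s w, h⟩, htx⟩ = s y - (lam : ℂ) • s w := by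
    rw [hsubty, s.map_sub, s.map_smul]
  refine ⟨s ⟨t ⟨s w, h⟩, htx⟩, ⟨⟨s w, h⟩, htx, rfl⟩, ?_⟩
  rw [dist_eq_norm, hval]
  have harr : s y - (s y - (lam : ℂ) • s w) = (lam : ℂ) • s w := by abel
  rw [harr, norm_smul]
  have hclam : ‖(lam : ℂ)‖ = lam := by
    rw [Complex.norm_real, Real.norm_eq_abs, abs_of_pos h0]
  rw [hclam]
  -- bounds
  have hkey : ⟪(w : F), (y : F)⟫_A = (lam : ℂ) • ⟪(w : F), (w : F)⟫_A + ⟪s w, s w⟫_A := by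
    rw [← heq, RightCStarModule.inner_add_right, RightCStarModule.inner_smul_right_complex]
    congr 1
    exact star_inner_eq ht.adj ⟨s w, h⟩ w
  have hpos : (0 : A) ≤ (lam : ℂ) • ⟪(w : F), (w : F)⟫_A := by
    have hsq : (lam : ℂ) • ⟪(w : F), (w : F)⟫_A =
        ⟪((Real.sqrt lam : ℝ) : ℂ) • (w : F), ((Real.sqrt lam : ℝ) : ℂ) • (w : F)⟫_A := by
      rw [RightCStarModule.inner_smul_left_complex, RightCStarModule.inner_smul_right_complex,
        smul_smul]
      congr 1
      rw [Complex.star_def, Complex.conj_ofReal, ← Complex.ofReal_mul,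
        Real.mul_self_sqrt h0.le]
    rw [hsq]
    exact RightCStarModule.inner_self_nonneg
  have hCS : ‖⟪(w : F), (y : F)⟫_A‖ ≤ ‖(w : F)‖ * ‖(y : F)‖ := RightCStarModule.norm_inner_le F
  have hn1 : lam * ‖(w : F)‖^2 ≤ ‖(w : F)‖ * ‖(y : F)‖ := by
    have : ‖(lam : ℂ) • ⟪(w : F), (w : F)⟫_A‖ ≤ ‖⟪(w : F), (y : F)⟫_A‖ := by
      rw [hkey]
      exact CStarAlgebra.norm_le_norm_of_nonneg_of_le hpos
        (le_add_of_nonneg_right RightCStarModule.inner_self_nonneg)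
    rw [norm_smul, hclam, ← RightCStarModule.norm_sq_eq] at this
    exact this.trans hCS
  have hn2 : ‖s w‖^2 ≤ ‖(w : F)‖ * ‖(y : F)‖ := by
    have : ‖⟪s w, s w⟫_A‖ ≤ ‖⟪(w : F), (y : F)⟫_A‖ := by
      rw [hkey]
      exact CStarAlgebra.norm_le_norm_of_nonneg_of_le RightCStarModule.inner_self_nonneg
        (le_add_of_nonneg_left hpos)
    rw [← RightCStarModule.norm_sq_eq] at this
    exact this.trans hCS
  have hn3 : lam * ‖(w : F)‖ ≤ ‖(y : F)‖ := by
    rcases eq_or_lt_of_le (norm_nonneg (w : F)) with hw0 | hw0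
    · rw [← hw0, mul_zero]; exact norm_nonneg _
    · have := hn1
      rw [pow_two, ← mul_assoc] at this
      exact le_of_mul_le_mul_right (by rwa [mul_comm (‖(w : F)‖) (‖(y : F)‖)] at this) hw0
  -- conclude : (lam * ‖s w‖)^2 ≤ lam * ‖y‖^2 < ε^2
  have hfin : (lam * ‖s w‖)^2 ≤ lam * ‖(y : F)‖^2 := by
    have e1 : (lam * ‖s w‖)^2 = lam * (lam * ‖s w‖^2) := by ring
    rw [e1]
    have e2 : lam * ‖s w‖^2 ≤ ‖(y : F)‖^2 := by
      calc lam * ‖s w‖^2 ≤ lam * (‖(w : F)‖ * ‖(y : F)‖) :=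
            mul_le_mul_of_nonneg_left hn2 h0.le
        _ = (lam * ‖(w : F)‖) * ‖(y : F)‖ := by ring
        _ ≤ ‖(y : F)‖ * ‖(y : F)‖ := mul_le_mul_of_nonneg_right hn3 (norm_nonneg _)
        _ = ‖(y : F)‖^2 := (sq _).symm
    exact mul_le_mul_of_nonneg_left e2 h0.le
  have : (lam * ‖s w‖)^2 < ε^2 := lt_of_le_of_lt hfin hsmall
  exact lt_of_pow_lt_pow_left₀ 2 hε.le this

lemma exists_bounded_preimage (ht : IsRegular A t s) (hR : IsClosed (ranSet t)) :
    ∃ C > 0, ∀ f ∈ ranSet t, ∃ x : t.domain, t x = f ∧ ‖(x : E)‖ ≤ C * ‖f‖ := by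
  classical
  set R : Submodule ℂ F := LinearMap.range t.toFun with hRdef
  have hRset : (R : Set F) = ranSet t := by
    ext f
    exact ⟨fun ⟨x, hx⟩ => ⟨x, hx⟩, fun ⟨x, hx⟩ => ⟨x, hx⟩⟩
  haveI hcR : CompleteSpace R := by
    have : IsClosed (R : Set F) := hRset ▸ hR
    exact this.completeSpace_coe
  haveI hcG : CompleteSpace t.graph := by
    have : IsClosed (t.graph : Set (E × F)) := ht.closedGraph
    exact this.completeSpace_coe
  let π₀ : t.graph →ₗ[ℂ] F := (LinearMap.snd ℂ E F).comp t.graph.subtype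
  have hmemR : ∀ p : t.graph, π₀ p ∈ R := by
    rintro ⟨p, hp⟩
    obtain ⟨xx, h1, h2⟩ := t.mem_graph_iff.mp hp
    exact ⟨xx, h2⟩
  let π₁ : t.graph →ₗ[ℂ] R := π₀.codRestrict R hmemR
  have hπcont : ∀ p : t.graph, ‖π₁ p‖ ≤ 1 * ‖p‖ := by
    intro p
    rw [one_mul]
    show ‖(p : E × F).2‖ ≤ ‖p‖
    exact norm_snd_le _
  let π : t.graph →L[ℂ] R := π₁.mkContinuous 1 hπcont
  have hsurj : Function.Surjective π := by
    rintro ⟨f, hf⟩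
    obtain ⟨x, hx⟩ := hf
    exact ⟨⟨(x, t x), t.mem_graph x⟩, Subtype.ext hx⟩
  obtain ⟨C, hC0, hC⟩ := π.exists_preimage_norm_le hsurj
  refine ⟨C, hC0, fun f hf => ?_⟩
  have hfR : f ∈ R := by rw [← hRset] at hf; exact hf
  obtain ⟨p, hp1, hp2⟩ := hC ⟨f, hfR⟩
  obtain ⟨xx, h1, h2⟩ := t.mem_graph_iff.mp p.2
  have hval : ((p : E × F)).2 = f := congrArg Subtype.val hp1
  refine ⟨xx, by rw [h2, hval], ?_⟩
  calc ‖(xx : E)‖ = ‖((p : E × F)).1‖ := by rw [h1]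
    _ ≤ ‖(p : E × F)‖ := norm_fst_le _
    _ ≤ C * ‖(⟨f, hfR⟩ : R)‖ := hp2
    _ = C * ‖f‖ := rfl

lemma ranSet_adj_isClosed (ht : IsRegular A t s) (hR : IsClosed (ranSet t)) :
    IsClosed (ranSet s) := by
  obtain ⟨C, hC0, hC⟩ := exists_bounded_preimage ht hR
  have hbnd : ∀ (x : t.domain) (h : t x ∈ s.domain), ‖t x‖ ≤ C * ‖s ⟨t x, h⟩‖ := by
    intro x h
    obtain ⟨x', hx'1, hx'2⟩ := hC (t x) ⟨x, rfl⟩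
    have hkey : ⟪t x, t x⟫_A = ⟪(x' : E), s ⟨t x, h⟩⟫_A := by
      rw [← ht.adj.inner_eq x' ⟨t x, h⟩, hx'1]
    have hsq : ‖t x‖^2 ≤ ‖t x‖ * (C * ‖s ⟨t x, h⟩‖) := by
      calc ‖t x‖^2 = ‖⟪t x, t x⟫_A‖ := RightCStarModule.norm_sq_eq
        _ = ‖⟪(x' : E), s ⟨t x, h⟩⟫_A‖ := by rw [hkey]
        _ ≤ ‖(x' : E)‖ * ‖s ⟨t x, h⟩‖ := RightCStarModule.norm_inner_le E
        _ ≤ (C * ‖t x‖) * ‖s ⟨t x, h⟩‖ := mul_le_mul_of_nonneg_right hx'2 (norm_nonneg _)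
        _ = ‖t x‖ * (C * ‖s ⟨t x, h⟩‖) := by ring
    exact norm_le_of_sq_le_mul (norm_nonneg _) (by positivity) hsq
  refine isClosed_of_closure_subset fun v hv => ?_
  have hsub : ranSet s ⊆ closure (stRanSet t s) := by
    rintro z ⟨y, rfl⟩
    exact res_approx ht y
  have hv2 : v ∈ closure (stRanSet t s) := closure_minimal hsub isClosed_closure hv
  obtain ⟨u, hu, hulim⟩ := mem_closure_iff_seq_limit.mp hv2
  choose x hx hval using hu
  have hcauchy : CauchySeq (fun n => t (x n)) := by
    refine cauchySeq_of_control C hulim.cauchySeq fun m n => ?_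
    rw [dist_eq_norm, dist_eq_norm]
    have hsubt : t (x m - x n) = t (x m) - t (x n) := t.map_sub _ _
    have h3 : t (x m - x n) ∈ s.domain := by rw [hsubt]; exact sub_mem (hx m) (hx n)
    have hsubty : (⟨t (x m - x n), h3⟩ : s.domain) = ⟨t (x m), hx m⟩ - ⟨t (x n), hx n⟩ := by
      apply Subtype.ext; simp [hsubt]
    have hsv : s ⟨t (x m - x n), h3⟩ = u m - u n := by
      rw [hsubty, s.map_sub, hval m, hval n]
    have hb := hbnd (x m - x n) h3
    rw [hsv, hsubt] at hb
    exact hb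
  obtain ⟨g, hg⟩ := cauchySeq_tendsto_of_complete hcauchy
  have hyc : Tendsto (fun n => ((⟨t (x n), hx n⟩ : s.domain) : F)) atTop (nhds g) := hg
  have hsc : Tendsto (fun n => s ⟨t (x n), hx n⟩) atTop (nhds v) := by
    have he : (fun n => s ⟨t (x n), hx n⟩) = u := funext hval
    rw [he]; exact hulim
  obtain ⟨hd, hvv⟩ := closed_s ht.adj ht.denseDom hyc hsc
  exact ⟨⟨g, hd⟩, hvv⟩

end Ops

end ROAux
end AuxDev


/-- a regular operator `t` has closed range iff its adjoint `t* = s`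
has closed range. -/
theorem ranSet_isClosed_iff_ranSet_adjoint_isClosed (t : E →ₗ.[ℂ] F) (s : F →ₗ.[ℂ] E)
    (ht : IsRegular A t s) : IsClosed (ranSet t) ↔ IsClosed (ranSet s) := by
  constructor
  · intro h
    exact ROAux.ranSet_adj_isClosed ht h
  · intro h
    exact ROAux.ranSet_adj_isClosed (ROAux.regular_symm ht) h
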